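/- Bounded differences property of the empirical trimmed classification error. Let g be a classifier, α ∈ (0,1), and let (ξ_1,…,ξ_n) and (ξ'_1,…,ξ'_n) be two samples in {0,1}×ℝ^p that differ only in their i-th coordinate (ξ_j = ξ'_j for all j ≠ i). Then |R_{n,α}(g)(ξ_1,…,ξ_n) − R_{n,α}(g)(ξ'_1,…,ξ'_n)| ≤ 1/(n(1−α)). -/

import Mathlib

open MeasureTheory

noncomputable section

/-- Admissible trimming weight vectors: `0 ≤ w_i ≤ 1/(n(1-α))` and `Σ w_i = 1`. -/
def weightSet (n : ℕ) (α : ℝ) : Set (Fin n → ℝ) :=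
  {w | (∀ i, 0 ≤ w i ∧ w i ≤ 1 / (n * (1 - α))) ∧ ∑ i, w i = 1}

/-- Empirical trimmed classification error
`R_{n,α}(g) = min_{w} Σ_i w_i 1{g(X_i) ≠ Y_i}`. -/
def empTrimmedErr {p : ℕ} (n : ℕ) (α : ℝ) (ξ : Fin n → Bool × (Fin p → ℝ))
    (g : (Fin p → ℝ) → Bool) : ℝ :=
  sInf ((fun w => ∑ i, w i * (if g (ξ i).2 ≠ (ξ i).1 then (1 : ℝ) else 0)) ''
    weightSet n α)

/-- Bounded differences property: changing one observation of the sample changes the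
empirical trimmed classification error by at most `1/(n(1−α))`. -/
theorem empTrimmedErr_bounded_differences {p : ℕ}
    {g : (Fin p → ℝ) → Bool} (hg : Measurable g)
    {α : ℝ} (hα : α ∈ Set.Ioo (0 : ℝ) 1)
    {n : ℕ} (hn : 0 < n) (i : Fin n)
    (ξ ξ' : Fin n → Bool × (Fin p → ℝ))
    (hdiff : ∀ j, j ≠ i → ξ j = ξ' j) :
    |empTrimmedErr n α ξ g - empTrimmedErr n α ξ' g| ≤ 1 / (n * (1 - α)) := by
  obtain ⟨hα0, hα1⟩ := hα
  have hn' : (0:ℝ) < n := by exact_mod_cast hn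
  have h1α : (0:ℝ) < 1 - α := by linarith
  have hden : (0:ℝ) < (n : ℝ) * (1 - α) := by positivity
  set c : ℝ := 1 / (n * (1 - α)) with hc
  set f : (Fin n → Bool × (Fin p → ℝ)) → (Fin n → ℝ) → ℝ :=
    fun ζ w => ∑ j, w j * (if g (ζ j).2 ≠ (ζ j).1 then (1:ℝ) else 0) with hf
  -- the uniform weight vector is admissible
  have hW : (fun _ : Fin n => (1:ℝ)/n) ∈ weightSet n α := by
    refine ⟨fun j => ⟨by positivity, ?_⟩, ?_⟩
    · rw [div_le_div_iff₀ hn' hden]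
      nlinarith
    · rw [Finset.sum_const, Finset.card_fin, nsmul_eq_mul]
      field_simp
  have hne : ∀ ζ, ((fun w => f ζ w) '' weightSet n α).Nonempty :=
    fun ζ => ⟨_, _, hW, rfl⟩
  have hbdd : ∀ ζ, BddBelow ((fun w => f ζ w) '' weightSet n α) := by
    intro ζ
    refine ⟨0, ?_⟩
    rintro x ⟨w, hw, rfl⟩
    apply Finset.sum_nonneg
    intro j _
    have h0 := (hw.1 j).1
    apply mul_nonneg h0
    split <;> norm_num
  -- key pointwise bound
  have hkey : ∀ (ζ ζ' : Fin n → Bool × (Fin p → ℝ)), (∀ j, j ≠ i → ζ j = ζ' j) →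
      ∀ w ∈ weightSet n α, f ζ w ≤ f ζ' w + c := by
    intro ζ ζ' hd w hw
    have hdiffsum : f ζ w - f ζ' w
        = w i * ((if g (ζ i).2 ≠ (ζ i).1 then (1:ℝ) else 0)
            - (if g (ζ' i).2 ≠ (ζ' i).1 then (1:ℝ) else 0)) := by
      rw [hf]
      simp only [← Finset.sum_sub_distrib, ← mul_sub]
      rw [Finset.sum_eq_single i]
      · intro j _ hj
        rw [hd j hj]
        ring
      · intro h; exact absurd (Finset.mem_univ i) h
    have h1 : f ζ w - f ζ' w ≤ w i * 1 := by
      rw [hdiffsum]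
      apply mul_le_mul_of_nonneg_left _ (hw.1 i).1
      split <;> split <;> norm_num
    have h2 : w i * 1 ≤ c := by
      rw [mul_one]; exact (hw.1 i).2
    linarith
  -- one-sided inequality on infima
  have hside : ∀ (ζ ζ' : Fin n → Bool × (Fin p → ℝ)), (∀ j, j ≠ i → ζ j = ζ' j) →
      empTrimmedErr n α ζ g ≤ empTrimmedErr n α ζ' g + c := by
    intro ζ ζ' hd
    have : empTrimmedErr n α ζ g - c ≤ empTrimmedErr n α ζ' g := by
      apply le_csInf (hne ζ')
      rintro b ⟨w, hw, rfl⟩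
      have h1 : empTrimmedErr n α ζ g ≤ f ζ w := csInf_le (hbdd ζ) ⟨w, hw, rfl⟩
      have h2 := hkey ζ ζ' hd w hw
      linarith
    linarith
  have hA := hside ξ ξ' hdiff
  have hB := hside ξ' ξ (fun j hj => (hdiff j hj).symm)
  rw [abs_sub_le_iff]
  constructor <;> linarith

end
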